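/- Let n ≥ 1 be an integer and let L : ℝ^n → ℝ be a linear map. If there exists z ∈ ℤ^n with z ∈ F_n^+ such that L(z) = min{L(x) : x ∈ F_n^+}, then L(z) = min{L(x) : x ∈ V_n^+(ℤ)}. -/

import Mathlib

open Finset


/-- The vector y_n(k,ℓ) ∈ ℝ^n (1-indexed), with y_k = (-1)^{ℓ-k+1} f_{n-ℓ}/f_{ℓ-k},
y_ℓ = f_{n-k}/f_{ℓ-k}, and y_i = 0 otherwise. -/
noncomputable def yVec (n k l : ℕ) : Fin n → ℝ := fun i =>
  if (i : ℕ) + 1 = k then (-1 : ℝ) ^ (l - k + 1) * (Nat.fib (n - l) : ℝ) / (Nat.fib (l - k) : ℝ)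
  else if (i : ℕ) + 1 = l then (Nat.fib (n - k) : ℝ) / (Nat.fib (l - k) : ℝ)
  else 0

/-- The 2×n matrix A_n whose first row is (f_1, …, f_n) and second row is (f_0, …, f_{n-1}). -/
noncomputable def Amat (n : ℕ) : Matrix (Fin 2) (Fin n) ℝ :=
  Matrix.of fun r j => if r = 0 then (Nat.fib ((j : ℕ) + 1) : ℝ) else (Nat.fib (j : ℕ) : ℝ)

/-- V_n^+(ℝ): the set of x ∈ ℝ^n with A_n x = (f_n, f_{n-1})^T and all entries nonnegative. -/
def Vplus (n : ℕ) : Set (Fin n → ℝ) :=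
  {x | (Amat n).mulVec x = ![(Nat.fib n : ℝ), (Nat.fib (n - 1) : ℝ)] ∧ ∀ i, 0 ≤ x i}

/-- F_n^+ = {y_n(k,ℓ) : 1 ≤ k < ℓ ≤ n with ℓ − k odd}. -/
def FplusSet (n : ℕ) : Set (Fin n → ℝ) :=
  {v | ∃ k l : ℕ, 1 ≤ k ∧ k < l ∧ l ≤ n ∧ Odd (l - k) ∧ v = yVec n k l}

/-- V_n^+(ℤ): elements of V_n^+(ℝ) with all entries integers. -/
def VplusZ (n : ℕ) : Set (Fin n → ℝ) :=
  {x | x ∈ Vplus n ∧ ∀ i, ∃ m : ℤ, x i = (m : ℝ)}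

/-- Let n ≥ 1 and L : ℝ^n → ℝ linear. If there exists z ∈ ℤ^n with z ∈ F_n^+
such that L(z) = min{L(x) : x ∈ F_n^+}, then L(z) = min{L(x) : x ∈ V_n^+(ℤ)}. -/



lemma fib_cassini (d : ℕ) : ((Nat.fib (d+1) : ℤ))^2 - Nat.fib (d+2) * Nat.fib d = (-1)^d := by
  induction d with
  | zero => simp
  | succ d ih =>
    have h1 : (Nat.fib (d+2) : ℤ) = Nat.fib d + Nat.fib (d+1) := by
      rw [Nat.fib_add_two]; push_cast; ring
    have h2 : (Nat.fib (d+3) : ℤ) = Nat.fib (d+1) + Nat.fib (d+2) := by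
      rw [show d+3 = (d+1)+2 from rfl, Nat.fib_add_two]; push_cast; ring
    show ((Nat.fib (d+2) : ℤ))^2 - Nat.fib (d+3) * Nat.fib (d+1) = (-1)^(d+1)
    linear_combination (-1:ℤ)*ih + (Nat.fib (d+2):ℤ) * h1 - (Nat.fib (d+1):ℤ) * h2

lemma fib_docagne (d a : ℕ) :
    (Nat.fib (d+1) : ℤ) * Nat.fib (a+d) - Nat.fib (d+a+1) * Nat.fib d = (-1)^d * Nat.fib a := by
  induction a using Nat.twoStepInduction with
  | zero => simp [Nat.add_comm]
  | one =>
    have := fib_cassini d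
    rw [show 1+d = d+1 from Nat.add_comm 1 d, show d+1+1 = d+2 from rfl]
    push_cast
    linear_combination this
  | more a ih1 ih2 =>
    have e1 : (Nat.fib (a+2+d) : ℤ) = Nat.fib (a+d) + Nat.fib (a+1+d) := by
      rw [show a+2+d = (a+d)+2 by ring, Nat.fib_add_two]; push_cast
      rw [show a+d+1 = a+1+d by ring]
    have e2 : (Nat.fib (d+(a+2)+1) : ℤ) = Nat.fib (d+a+1) + Nat.fib (d+(a+1)+1) := by
      rw [show d+(a+2)+1 = (d+a+1)+2 by ring, Nat.fib_add_two]; push_cast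
      rw [show d+a+1+1 = d+(a+1)+1 by ring]
    have e3 : (Nat.fib (a+2) : ℤ) = Nat.fib a + Nat.fib (a+1) := by
      rw [Nat.fib_add_two]; push_cast; ring
    linear_combination ih1 + ih2 + (Nat.fib (d+1):ℤ) * e1 - (Nat.fib d:ℤ) * e2 - (-1:ℤ)^d * e3

lemma fib_main (m d a : ℕ) :
    (Nat.fib (m+d) : ℤ) * Nat.fib (a+d) - (-1)^d * Nat.fib m * Nat.fib a
      = Nat.fib (m+d+a) * Nat.fib d := by
  induction m using Nat.twoStepInduction with
  | zero => simp [Nat.add_comm, mul_comm]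
  | one =>
    have := fib_docagne d a
    rw [show 1+d = d+1 from Nat.add_comm 1 d, show d+1+a = d+a+1 by ring]
    simp only [Nat.fib_one]
    push_cast
    linear_combination this
  | more m ih1 ih2 =>
    have e1 : (Nat.fib (m+2+d) : ℤ) = Nat.fib (m+d) + Nat.fib (m+1+d) := by
      rw [show m+2+d = (m+d)+2 by ring, Nat.fib_add_two]; push_cast
      rw [show m+d+1 = m+1+d by ring]
    have e2 : (Nat.fib (m+2+d+a) : ℤ) = Nat.fib (m+d+a) + Nat.fib (m+1+d+a) := by
      rw [show m+2+d+a = (m+d+a)+2 by ring, Nat.fib_add_two]; push_cast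
      rw [show m+d+a+1 = m+1+d+a by ring]
    have e3 : (Nat.fib (m+2) : ℤ) = Nat.fib m + Nat.fib (m+1) := by
      rw [Nat.fib_add_two]; push_cast; ring
    linear_combination ih1 + ih2 + (Nat.fib (a+d):ℤ) * e1 - (Nat.fib d:ℤ) * e2 - (-1:ℤ)^d * (Nat.fib a:ℤ) * e3

lemma fib_docagne_real (d a : ℕ) :
    (Nat.fib (d+1) : ℝ) * Nat.fib (a+d) - Nat.fib (d+a+1) * Nat.fib d = (-1)^d * Nat.fib a := by
  exact_mod_cast fib_docagne d a

lemma fib_main_real (m d a : ℕ) (hd : Odd d) :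
    (Nat.fib (m+d) : ℝ) * Nat.fib (a+d) + Nat.fib m * Nat.fib a
      = Nat.fib (m+d+a) * Nat.fib d := by
  have h := fib_main m d a
  rw [hd.neg_one_pow] at h
  have h2 : (Nat.fib (m+d) * Nat.fib (a+d) + Nat.fib m * Nat.fib a : ℤ)
      = Nat.fib (m+d+a) * Nat.fib d := by linear_combination h
  exact_mod_cast h2

lemma fib_real_pos {d : ℕ} (hd : 0 < d) : (0:ℝ) < Nat.fib d := by
  exact_mod_cast Nat.cast_pos.mpr (Nat.fib_pos.mpr hd)

lemma yVec_decomp (n k l : ℕ) (hk : 1 ≤ k) (hkl : k < l) (hl : l ≤ n) :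
    yVec n k l =
      Pi.single (⟨k-1, by omega⟩ : Fin n)
        ((-1 : ℝ) ^ (l - k + 1) * (Nat.fib (n - l) : ℝ) / (Nat.fib (l - k) : ℝ))
      + Pi.single (⟨l-1, by omega⟩ : Fin n) ((Nat.fib (n - k) : ℝ) / (Nat.fib (l - k) : ℝ)) := by
  funext i
  simp only [yVec, Pi.add_apply, Pi.single_apply, Fin.ext_iff]
  split_ifs <;> simp_all <;> omega

lemma yVec_mem (n k l : ℕ) (hk : 1 ≤ k) (hkl : k < l) (hl : l ≤ n) (hodd : Odd (l-k)) :
    yVec n k l ∈ Vplus n := by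
  have hsign : (-1 : ℝ) ^ (l - k + 1) = 1 := Even.neg_one_pow (by simpa using hodd.add_one)
  have hfd : (0:ℝ) < Nat.fib (l-k) := fib_real_pos (by omega)
  constructor
  · rw [yVec_decomp n k l hk hkl hl, Matrix.mulVec_add, Matrix.mulVec_single,
      Matrix.mulVec_single]
    funext r
    fin_cases r
    · show (Amat n) 0 ⟨k-1, by omega⟩ * _ + (Amat n) 0 ⟨l-1, by omega⟩ * _ = _
      simp only [Amat, Matrix.of_apply, if_pos rfl, Matrix.cons_val_zero]
      norm_num
      rw [show k-1+1 = k by omega, show l-1+1 = l by omega, hsign]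
      have h := fib_main_real k (l-k) (n-l) hodd
      rw [show k+(l-k)+(n-l) = n by omega, show k+(l-k) = l by omega,
        show (n-l)+(l-k) = n-k by omega] at h
      field_simp
      linear_combination h
    · show (Amat n) 1 ⟨k-1, by omega⟩ * _ + (Amat n) 1 ⟨l-1, by omega⟩ * _ = _
      simp only [Amat, Matrix.of_apply, Matrix.cons_val_one, Matrix.head_cons]
      norm_num
      rw [hsign]
      have h := fib_main_real (k-1) (l-k) (n-l) hodd
      rw [show (k-1)+(l-k)+(n-l) = n-1 by omega, show (k-1)+(l-k) = l-1 by omega,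
        show (n-l)+(l-k) = n-k by omega] at h
      field_simp
      linear_combination h
  · intro i
    simp only [yVec]
    split_ifs
    · rw [hsign]; positivity
    · positivity
    · exact le_rfl

lemma pair_case (n : ℕ) (hn : 2 ≤ n) (x : Fin n → ℝ) (hx : x ∈ Vplus n) (p q : Fin n)
    (hpq : p < q) (hsupp : ∀ i, i ≠ p → i ≠ q → x i = 0) : x ∈ FplusSet n := by
  obtain ⟨hA, hpos⟩ := hx
  set P := (p : ℕ) with hP
  set Q := (q : ℕ) with hQ
  have hPQ : P < Q := hpq
  have hQn : Q < n := q.isLt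
  have hxeq : x = Pi.single p (x p) + Pi.single q (x q) := by
    funext i
    by_cases hip : i = p
    · subst hip; simp [Pi.single_apply, (Fin.lt_iff_val_lt_val.mp hpq).ne, hpq.ne]
    · by_cases hiq : i = q
      · subst hiq; simp [Pi.single_apply, hpq.ne']
      · simp [Pi.single_apply, hip, hiq, hsupp i hip hiq]
  rw [hxeq, Matrix.mulVec_add, Matrix.mulVec_single, Matrix.mulVec_single] at hA
  have e0 : (Nat.fib (P+1) : ℝ) * x p + Nat.fib (Q+1) * x q = Nat.fib n := by
    have := congrFun hA 0
    simp [Amat] at this; rw [hP, hQ]; linear_combination this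
  have e1 : (Nat.fib P : ℝ) * x p + Nat.fib Q * x q = Nat.fib (n-1) := by
    have := congrFun hA 1
    simp [Amat] at this; rw [hP, hQ]; linear_combination this
  -- determinant and Cramer identities
  have hdet : (Nat.fib (P+1) : ℝ) * Nat.fib Q - Nat.fib (Q+1) * Nat.fib P
      = (-1)^P * Nat.fib (Q-P) := by
    have := fib_docagne_real P (Q-P)
    rwa [show (Q-P)+P = Q by omega, show P+(Q-P)+1 = Q+1 by omega] at this
  have hgp : (Nat.fib (P+1) : ℝ) * Nat.fib (n-1) - Nat.fib n * Nat.fib P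
      = (-1)^P * Nat.fib (n-1-P) := by
    have := fib_docagne_real P (n-1-P)
    rwa [show (n-1-P)+P = n-1 by omega, show P+(n-1-P)+1 = n by omega] at this
  have hgq : (Nat.fib (Q+1) : ℝ) * Nat.fib (n-1) - Nat.fib n * Nat.fib Q
      = (-1)^Q * Nat.fib (n-1-Q) := by
    have := fib_docagne_real Q (n-1-Q)
    rwa [show (n-1-Q)+Q = n-1 by omega, show Q+(n-1-Q)+1 = n by omega] at this
  set ε := ((-1:ℝ)^P) with hε
  set εQ := ((-1:ℝ)^Q) with hεQ
  set εd := ((-1:ℝ)^(Q-P)) with hεd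
  have hpowP : ε * ε = 1 := by
    rw [hε, ← pow_add, show P+P = 2*P by ring, pow_mul]; norm_num
  have hpowQ : εQ * ε = εd := by
    rw [hε, hεQ, hεd, ← pow_add, show Q+P = (Q-P)+2*P by omega, pow_add, pow_mul]; norm_num
  have hq2 : x q * (ε * Nat.fib (Q-P)) = ε * Nat.fib (n-1-P) := by
    linear_combination (-(x q)) * hdet + (Nat.fib (P+1) : ℝ) * e1 - (Nat.fib P : ℝ) * e0 + hgp
  have hp2 : x p * (ε * Nat.fib (Q-P)) = -(εQ * Nat.fib (n-1-Q)) := by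
    linear_combination (-(x p)) * hdet - (Nat.fib (Q+1) : ℝ) * e1 + (Nat.fib Q : ℝ) * e0 - hgq
  have hxq : x q * Nat.fib (Q-P) = Nat.fib (n-1-P) := by
    linear_combination ε * hq2 + ((Nat.fib (n-1-P):ℝ) - x q * (Nat.fib (Q-P):ℝ)) * hpowP
  have hxp : x p * Nat.fib (Q-P) = -(εd * Nat.fib (n-1-Q)) := by
    linear_combination ε * hp2 + (-(x p * (Nat.fib (Q-P):ℝ))) * hpowP + (-(Nat.fib (n-1-Q):ℝ)) * hpowQ
  have hfQP : (0:ℝ) < Nat.fib (Q-P) := fib_real_pos (by omega)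
  by_cases hQtop : Q = n - 1
  · -- x = e_q with q at position n
    have hnP : n-1-P = Q-P := by omega
    rw [hnP] at hxq
    have hxq1 : x q = 1 := by
      have h1 : x q * (Nat.fib (Q-P):ℝ) = 1 * (Nat.fib (Q-P):ℝ) := by rw [one_mul, hxq]
      exact mul_right_cancel₀ hfQP.ne' h1
    have hxp0 : x p = 0 := by
      have h0 : (Nat.fib (n-1-Q) : ℝ) = 0 := by rw [show n-1-Q = 0 by omega]; simp
      rw [h0] at hxp
      have h2 : x p * (Nat.fib (Q-P):ℝ) = 0 := by rw [hxp]; ring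
      rcases mul_eq_zero.mp h2 with h | h
      · exact h
      · exact absurd h hfQP.ne'
    refine ⟨n-1, n, by omega, by omega, le_refl n,
      by rw [show n-(n-1) = 1 by omega]; exact odd_one, ?_⟩
    funext i
    by_cases hiq : i = q
    · subst hiq
      simp only [yVec]
      rw [if_neg (by omega), if_pos (by omega), show n-(n-1) = 1 by omega]
      simpa using hxq1
    · have hxi0 : x i = 0 := by
        by_cases hip : i = p
        · subst hip; exact hxp0
        · exact hsupp i hip hiq
      have hine : (i:ℕ) + 1 ≠ n := fun hcon => hiq (Fin.ext (by omega))
      rw [hxi0]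
      simp only [yVec]
      split_ifs with h1
      · rw [show n - n = 0 by omega]; simp
      · rfl
  · -- generic case: support is genuinely {p, q}, parity forced
    have hfnQ : (0:ℝ) < Nat.fib (n-1-Q) := fib_real_pos (by omega)
    have hoddQP : Odd (Q - P) := by
      by_contra heven
      rw [Nat.not_odd_iff_even] at heven
      have h1 : εd = 1 := by rw [hεd]; exact heven.neg_one_pow
      rw [h1, one_mul] at hxp
      nlinarith [hpos p, hfQP, hfnQ]
    have hsgn : εd = -1 := by rw [hεd]; exact hoddQP.neg_one_pow
    have hxp' : x p * Nat.fib (Q-P) = Nat.fib (n-1-Q) := by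
      rw [hsgn] at hxp; linear_combination hxp
    have hsgn2 : (-1:ℝ)^(Q-P+1) = 1 := Even.neg_one_pow (by simpa using hoddQP.add_one)
    refine ⟨P+1, Q+1, by omega, by omega, by omega,
      by rw [show Q+1-(P+1) = Q-P by omega]; exact hoddQP, ?_⟩
    funext i
    simp only [yVec]
    rw [show Q+1-(P+1) = Q-P by omega, show n-(Q+1) = n-1-Q by omega,
      show n-(P+1) = n-1-P by omega, hsgn2]
    by_cases hip : i = p
    · subst hip
      rw [if_pos (by omega)]
      rw [one_mul, eq_div_iff hfQP.ne']
      exact hxp'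
    · by_cases hiq : i = q
      · subst hiq
        rw [if_neg (by omega), if_pos (by omega), eq_div_iff hfQP.ne']
        exact hxq
      · have h1 : (i:ℕ) + 1 ≠ P+1 := fun hcon => hip (Fin.ext (by omega))
        have h2 : (i:ℕ) + 1 ≠ Q+1 := fun hcon => hiq (Fin.ext (by omega))
        rw [if_neg h1, if_neg h2]
        exact hsupp i hip hiq

lemma det_ne (a b : ℕ) (hab : a ≠ b) :
    (Nat.fib (a+1) : ℝ) * Nat.fib b - Nat.fib (b+1) * Nat.fib a ≠ 0 := by
  rcases lt_or_gt_of_ne hab with h | h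
  · have := fib_docagne_real a (b-a)
    rw [show (b-a)+a = b by omega, show a+(b-a)+1 = b+1 by omega] at this
    rw [this]
    have h1 : (0:ℝ) < Nat.fib (b-a) := fib_real_pos (by omega)
    have h2 : (-1:ℝ)^a ≠ 0 := pow_ne_zero _ (by norm_num)
    positivity
  · have := fib_docagne_real b (a-b)
    rw [show (a-b)+b = a by omega, show b+(a-b)+1 = a+1 by omega] at this
    intro hcon
    have h1 : (0:ℝ) < Nat.fib (a-b) := fib_real_pos (by omega)
    have h2 : ((-1:ℝ)^b) * Nat.fib (a-b) = 0 := by linear_combination -this - hcon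
    rcases mul_eq_zero.mp h2 with h3 | h3
    · exact pow_ne_zero _ (by norm_num : (-1:ℝ) ≠ 0) h3
    · exact h1.ne' h3

lemma step (n : ℕ) (L : (Fin n → ℝ) →ₗ[ℝ] ℝ) (x : Fin n → ℝ) (hx : x ∈ Vplus n)
    (d : Fin n → ℝ) (hAd : (Amat n).mulVec d = 0)
    (hds : ∀ m, d m ≠ 0 → x m ≠ 0) (hneg : ∃ m, d m < 0) (hLd : L d ≤ 0) :
    ∃ x' ∈ Vplus n, L x' ≤ L x ∧
      (filter (fun i => x' i ≠ 0) univ).card < (filter (fun i => x i ≠ 0) univ).card := by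
  obtain ⟨hA, hpos⟩ := hx
  obtain ⟨m₁, hm₁⟩ := hneg
  have hTne : (filter (fun m => d m < 0) univ).Nonempty := ⟨m₁, by simp [hm₁]⟩
  obtain ⟨m₀, hm₀T, hminT⟩ :=
    (filter (fun m => d m < 0) univ).exists_min_image (fun m => x m / (-(d m))) hTne
  have hdm₀ : d m₀ < 0 := by simpa using hm₀T
  set t := x m₀ / (-(d m₀)) with ht
  have hxm₀ : 0 < x m₀ :=
    lt_of_le_of_ne (hpos m₀) (Ne.symm (hds m₀ (ne_of_lt hdm₀)))
  have ht0 : 0 < t := div_pos hxm₀ (by linarith)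
  have hkey : ∀ i, d i < 0 → t * (-(d i)) ≤ x i := by
    intro i hdi
    have h1 : t ≤ x i / (-(d i)) := hminT i (by simp [hdi])
    exact (le_div_iff₀ (by linarith)).mp h1
  refine ⟨x + t • d, ⟨?_, ?_⟩, ?_, ?_⟩
  · rw [Matrix.mulVec_add, Matrix.mulVec_smul, hAd, hA]
    funext r; simp
  · intro i
    simp only [Pi.add_apply, Pi.smul_apply, smul_eq_mul]
    by_cases hdi : d i < 0
    · have := hkey i hdi
      linarith
    · have h1 : 0 ≤ d i := not_lt.mp hdi
      have := hpos i
      nlinarith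
  · rw [map_add, map_smul, smul_eq_mul]
    nlinarith
  · have hdne : d m₀ ≠ 0 := ne_of_lt hdm₀
    have hzero : x m₀ + t * d m₀ = 0 := by
      have h1 : t * d m₀ = -x m₀ := by
        rw [ht, div_mul_eq_mul_div, div_eq_iff (neg_ne_zero.mpr hdne)]
        ring
      linear_combination h1
    apply Finset.card_lt_card
    constructor
    · intro i hi
      simp only [mem_filter, mem_univ, true_and] at hi ⊢
      intro hx0
      apply hi
      have hd0 : d i = 0 := by
        by_contra hd0
        exact (hds i hd0) hx0
      simp [Pi.add_apply, hx0, hd0]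
    · intro hcon
      have h1 : m₀ ∈ filter (fun i => x i ≠ 0) univ := by simp [hxm₀.ne']
      have h2 := hcon h1
      simp only [mem_filter, mem_univ, true_and, Pi.add_apply, Pi.smul_apply,
        smul_eq_mul] at h2
      exact h2 hzero

lemma key (n : ℕ) (hn : 2 ≤ n) (L : (Fin n → ℝ) →ₗ[ℝ] ℝ) :
    ∀ s : ℕ, ∀ x, x ∈ Vplus n → (filter (fun i => x i ≠ 0) univ).card ≤ s →
      ∃ w ∈ FplusSet n, L w ≤ L x := by
  have hsmall : ∀ x, x ∈ Vplus n → (filter (fun i => x i ≠ 0) univ).card ≤ 2 →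
      x ∈ FplusSet n := by
    intro x hx hc
    set S := filter (fun i => x i ≠ 0) univ with hS
    have hout : ∀ i, i ∉ S → x i = 0 := by
      intro i hi; by_contra h; exact hi (by simp [hS, h])
    have hpair : ∃ p q : Fin n, p < q ∧ ∀ i, i ≠ p → i ≠ q → x i = 0 := by
      interval_cases hSc : S.card
      · exact ⟨⟨0, by omega⟩, ⟨1, by omega⟩, by simp [Fin.lt_iff_val_lt_val],
          fun i _ _ => hout i (by simp [Finset.card_eq_zero.mp hSc])⟩
      · obtain ⟨e, he⟩ := Finset.card_eq_one.mp hSc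
        by_cases h0 : (e : ℕ) = 0
        · exact ⟨e, ⟨1, by omega⟩, by simp [Fin.lt_iff_val_lt_val, h0],
            fun i hip _ => hout i (by simp [he, hip])⟩
        · exact ⟨⟨0, by omega⟩, e, by simp [Fin.lt_iff_val_lt_val]; omega,
            fun i _ hiq => hout i (by simp [he, hiq])⟩
      · obtain ⟨a, b, hab, hS2⟩ := Finset.card_eq_two.mp hSc
        rcases lt_or_gt_of_ne hab with h | h
        · exact ⟨a, b, h, fun i hia hib => hout i (by simp [hS2, hia, hib])⟩
        · exact ⟨b, a, h, fun i hib hia => hout i (by simp [hS2, hia, hib])⟩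
    obtain ⟨p, q, hpq, hsupp⟩ := hpair
    exact pair_case n hn x hx p q hpq hsupp
  intro s
  induction s with
  | zero =>
    intro x hx hc
    exact ⟨x, hsmall x hx (by omega), le_rfl⟩
  | succ s ih =>
    intro x hx hc
    by_cases h2 : (filter (fun i => x i ≠ 0) univ).card ≤ 2
    · exact ⟨x, hsmall x hx h2, le_rfl⟩
    · -- at least 3 support elements
      set S := filter (fun i => x i ≠ 0) univ with hS
      obtain ⟨T, hTS, hT3⟩ := Finset.exists_subset_card_eq (s := S) (n := 3) (by omega)
      obtain ⟨a, b, c, hab, hac, hbc, rfl⟩ := Finset.card_eq_three.mp hT3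
      have haS : a ∈ S := hTS (by simp)
      have hbS : b ∈ S := hTS (by simp)
      have hcS : c ∈ S := hTS (by simp)
      set A := (a : ℕ); set B := (b : ℕ); set C := (c : ℕ)
      set Da : ℝ := (Nat.fib (B+1) : ℝ) * Nat.fib C - Nat.fib (C+1) * Nat.fib B with hDa
      set Db : ℝ := (Nat.fib (C+1) : ℝ) * Nat.fib A - Nat.fib (A+1) * Nat.fib C with hDb
      set Dc : ℝ := (Nat.fib (A+1) : ℝ) * Nat.fib B - Nat.fib (B+1) * Nat.fib A with hDc
      have hDcne : Dc ≠ 0 := det_ne A B (fun h => hab (Fin.ext h))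
      set dv : Fin n → ℝ := Pi.single a Da + Pi.single b Db + Pi.single c Dc with hdv
      have hda : dv a = Da := by
        simp [hdv, Pi.single_apply, hab, hac, Ne.symm hab, Ne.symm hac]
      have hdb : dv b = Db := by
        simp [hdv, Pi.single_apply, Ne.symm hab, hbc, hab, Ne.symm hbc]
      have hdc : dv c = Dc := by
        simp [hdv, Pi.single_apply, Ne.symm hac, Ne.symm hbc, hac, hbc]
      have hdother : ∀ m, m ≠ a → m ≠ b → m ≠ c → dv m = 0 := by
        intro m h1 h2 h3
        simp [hdv, Pi.single_apply, h1, h2, h3]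
      have hAd : (Amat n).mulVec dv = 0 := by
        rw [hdv, Matrix.mulVec_add, Matrix.mulVec_add, Matrix.mulVec_single,
          Matrix.mulVec_single, Matrix.mulVec_single]
        funext r
        fin_cases r <;>
          simp only [Pi.add_apply, Pi.zero_apply, Amat, Matrix.of_apply] <;>
          norm_num [hDa, hDb, hDc] <;> ring
      have hds : ∀ m, dv m ≠ 0 → x m ≠ 0 := by
        intro m hm
        by_cases h1 : m = a
        · subst h1; simpa [hS] using haS
        · by_cases h2 : m = b
          · subst h2; simpa [hS] using hbS
          · by_cases h3 : m = c
            · subst h3; simpa [hS] using hcS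
            · exact absurd (hdother m h1 h2 h3) hm
      -- row-0 equation for dv
      have hrow0 : (Nat.fib (A+1) : ℝ) * Da + Nat.fib (B+1) * Db + Nat.fib (C+1) * Dc = 0 := by
        rw [hDa, hDb, hDc]; ring
      have hfA : (0:ℝ) < Nat.fib (A+1) := fib_real_pos (Nat.succ_pos _)
      have hfB : (0:ℝ) < Nat.fib (B+1) := fib_real_pos (Nat.succ_pos _)
      have hfC : (0:ℝ) < Nat.fib (C+1) := fib_real_pos (Nat.succ_pos _)
      have hexneg : ∃ m, dv m < 0 := by
        by_contra hcon
        push_neg at hcon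
        have ha' := hcon a; rw [hda] at ha'
        have hb' := hcon b; rw [hdb] at hb'
        have hc' := hcon c; rw [hdc] at hc'
        have : Dc = 0 := by nlinarith
        exact hDcne this
      have hexpos : ∃ m, 0 < dv m := by
        by_contra hcon
        push_neg at hcon
        have ha' := hcon a; rw [hda] at ha'
        have hb' := hcon b; rw [hdb] at hb'
        have hc' := hcon c; rw [hdc] at hc'
        have : Dc = 0 := by nlinarith
        exact hDcne this
      have hstep : ∃ x' ∈ Vplus n, L x' ≤ L x ∧
          (filter (fun i => x' i ≠ 0) univ).card < S.card := by
        rcases le_or_gt (L dv) 0 with hL | hL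
        · exact step n L x hx dv hAd hds hexneg hL
        · refine step n L x hx (-dv) ?_ ?_ ?_ ?_
          · rw [Matrix.mulVec_neg, hAd]; simp
          · intro m hm; exact hds m (fun h => hm (by simp [h]))
          · obtain ⟨m, hm⟩ := hexpos; exact ⟨m, by simpa using hm⟩
          · rw [map_neg]; linarith
      obtain ⟨x', hx', hLx', hcard⟩ := hstep
      obtain ⟨w, hw, hLw⟩ := ih x' hx' (by omega)
      exact ⟨w, hw, hLw.trans hLx'⟩


theorem stmt5 (n : ℕ) (hn : 1 ≤ n) (L : (Fin n → ℝ) →ₗ[ℝ] ℝ) (z : Fin n → ℝ)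
    (hzZ : ∀ i, ∃ m : ℤ, z i = (m : ℝ)) (hzF : z ∈ FplusSet n)
    (hmin : IsLeast (L '' FplusSet n) (L z)) :
    IsLeast (L '' VplusZ n) (L z) := by
  obtain ⟨k, l, hk, hkl, hl, hodd, hz⟩ := hzF
  have hn2 : 2 ≤ n := by omega
  have hzV : z ∈ Vplus n := by rw [hz]; exact yVec_mem n k l hk hkl hl hodd
  constructor
  · exact ⟨z, ⟨hzV, hzZ⟩, rfl⟩
  · rintro v ⟨x, ⟨hxV, _⟩, rfl⟩
    obtain ⟨w, hwF, hLw⟩ := key n hn2 L (filter (fun i => x i ≠ 0) univ).card x hxV le_rfl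
    exact le_trans (hmin.2 ⟨w, hwF, rfl⟩) hLw
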